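/- (Closed form for the exponential of a 2×2 real matrix; Corollary 2.4 of Bernstein and So, real-eigenvalue case.) Let A be a real 2×2 matrix, let s := tr(A)/2, and suppose det(A − s·I) < 0; set q := √(−det(A − s·I)) > 0. Then for every t ∈ ℝ, exp(tA) = a(t)·I + b(t)·A, where a(t) := e^{st}·(cosh(qt) − s·sinh(qt)/q) and b(t) := e^{st}·sinh(qt)/q. -/

import Mathlib

open Matrix Real

attribute [local instance] Matrix.linftyOpNormedAddCommGroup Matrix.linftyOpNormedRing
  Matrix.linftyOpNormedAlgebra

/-- Closed form for the exponential of a real 2×2 matrix (real-eigenvalue case,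
Corollary 2.4 of Bernstein and So): writing `s = tr(A)/2` and
`q = √(−det(A − s·I)) > 0`, one has `exp(tA) = a(t)·I + b(t)·A` with
`a(t) = e^{st}(cosh(qt) − s·sinh(qt)/q)` and `b(t) = e^{st}·sinh(qt)/q`. -/
theorem exp_two_by_two (A : Matrix (Fin 2) (Fin 2) ℝ)
    (s : ℝ) (hs : s = A.trace / 2)
    (hdet : (A - s • (1 : Matrix (Fin 2) (Fin 2) ℝ)).det < 0)
    (q : ℝ) (hq : q = Real.sqrt (-(A - s • (1 : Matrix (Fin 2) (Fin 2) ℝ)).det)) :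
    ∀ t : ℝ,
      NormedSpace.exp (t • A) =
        (Real.exp (s * t) * (Real.cosh (q * t) - s * Real.sinh (q * t) / q)) •
            (1 : Matrix (Fin 2) (Fin 2) ℝ) +
          (Real.exp (s * t) * (Real.sinh (q * t) / q)) • A := by
  have h2s : A 0 0 + A 1 1 = 2 * s := by
    simp [Matrix.trace_fin_two] at hs; linarith
  have hdd : (A - s • (1 : Matrix (Fin 2) (Fin 2) ℝ)).det = A.det - s ^ 2 := by
    norm_num [Matrix.det_fin_two, Matrix.sub_apply, Matrix.smul_apply, Matrix.one_apply, Fin.ext_iff,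
      smul_eq_mul, mul_one, mul_zero]
    linear_combination (-s) * h2s
  have hq0 : 0 < q := by
    rw [hq]; exact Real.sqrt_pos.mpr (by linarith)
  have hq2 : q ^ 2 = s ^ 2 - A.det := by
    rw [hq, Real.sq_sqrt (by linarith), hdd]; ring
  have hCH : A * A = (2 * s) • A - A.det • (1 : Matrix (Fin 2) (Fin 2) ℝ) := by
    ext i j
    fin_cases i <;> fin_cases j <;>
      norm_num [Matrix.mul_apply, Fin.sum_univ_two, Matrix.det_fin_two, Matrix.sub_apply,
        Matrix.smul_apply, Matrix.one_apply, smul_eq_mul, Fin.ext_iff] <;>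
      first
        | linear_combination A 0 0 * h2s
        | linear_combination A 0 1 * h2s
        | linear_combination A 1 0 * h2s
        | linear_combination A 1 1 * h2s
  set a : ℝ → ℝ := fun t => Real.exp (s * t) * (Real.cosh (q * t) - s * Real.sinh (q * t) / q)
    with ha_def
  set b : ℝ → ℝ := fun t => Real.exp (s * t) * (Real.sinh (q * t) / q) with hb_def
  set f : ℝ → Matrix (Fin 2) (Fin 2) ℝ := fun t => a t • (1 : Matrix (Fin 2) (Fin 2) ℝ) + b t • A
    with hf_def
  have h1 : ∀ t : ℝ, HasDerivAt (fun t : ℝ => Real.exp (s * t)) (s * Real.exp (s * t)) t := by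
    intro t; simpa [mul_comm] using ((hasDerivAt_id t).const_mul s).exp
  have h2 : ∀ t : ℝ, HasDerivAt (fun t : ℝ => Real.cosh (q * t)) (q * Real.sinh (q * t)) t := by
    intro t; simpa [mul_comm] using ((hasDerivAt_id t).const_mul q).cosh
  have h3 : ∀ t : ℝ, HasDerivAt (fun t : ℝ => Real.sinh (q * t)) (q * Real.cosh (q * t)) t := by
    intro t; simpa [mul_comm] using ((hasDerivAt_id t).const_mul q).sinh
  have ha : ∀ t : ℝ, HasDerivAt a (-(A.det) * b t) t := by
    intro t
    have := (h1 t).mul (((h2 t).sub (((h3 t).const_mul s).div_const q)))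
    refine this.congr_deriv (Eq.symm ?_)
    simp only [hb_def, Pi.sub_apply]
    field_simp
    linear_combination (-Real.sinh (t * q)) * hq2
  have hb : ∀ t : ℝ, HasDerivAt b (a t + 2 * s * b t) t := by
    intro t
    have := (h1 t).mul ((h3 t).div_const q)
    refine this.congr_deriv (Eq.symm ?_)
    simp only [ha_def, hb_def]
    field_simp
    ring
  have hf : ∀ t : ℝ, HasDerivAt f (f t * A) t := by
    intro t
    have := ((ha t).smul_const (1 : Matrix (Fin 2) (Fin 2) ℝ)).add ((hb t).smul_const A)
    refine this.congr_deriv (Eq.symm ?_)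
    simp only [hf_def, add_mul, smul_mul_assoc, one_mul, hCH, smul_sub, smul_smul]
    module
  set g : ℝ → Matrix (Fin 2) (Fin 2) ℝ :=
    fun t => f t * NormedSpace.exp (t • (-A)) with hg_def
  have hexp : ∀ t : ℝ, HasDerivAt (fun u : ℝ => NormedSpace.exp (u • (-A)))
      (-A * NormedSpace.exp (t • (-A))) t := fun t => hasDerivAt_exp_smul_const' (-A) t
  have hg : ∀ t : ℝ, HasDerivAt g 0 t := by
    intro t
    have := (hf t).mul (hexp t)
    refine this.congr_deriv (Eq.symm ?_)
    rw [neg_mul, mul_neg, mul_assoc, add_neg_cancel]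
  have hgconst : ∀ t : ℝ, g t = g 0 :=
    fun t => is_const_of_deriv_eq_zero (fun u => (hg u).differentiableAt)
      (fun u => (hg u).deriv) t 0
  have hg0 : g 0 = 1 := by
    simp [hg_def, hf_def, ha_def, hb_def, NormedSpace.exp_zero]
  intro t
  have hinv : NormedSpace.exp (t • (-A)) * NormedSpace.exp (t • A) = 1 := by
    erw [smul_neg, ← NormedSpace.exp_add_of_commute ((Commute.refl (t • A)).neg_left),
      neg_add_cancel, NormedSpace.exp_zero]
  have : f t = NormedSpace.exp (t • A) := by
    calc f t = f t * (NormedSpace.exp (t • (-A)) * NormedSpace.exp (t • A)) := by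
            rw [hinv, mul_one]
      _ = g t * NormedSpace.exp (t • A) := by rw [hg_def]; ring_nf; rw [mul_assoc]
      _ = NormedSpace.exp (t • A) := by rw [hgconst t, hg0, one_mul]
  rw [← this]
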